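/- Let c ∈ (0,1) and let P ∈ SO(3) be a rotation about the z-axis L. Then the attractor A(c,P) is connected if and only if A₁ ∩ A₃ ≠ ∅, where A_i = f_i(A(c,P)). Moreover, the four conditions A₁∩A₃ ≠ ∅, A₁∩A₄ ≠ ∅, A₂∩A₄ ≠ ∅, A₂∩A₃ ≠ ∅ are pairwise equivalent. -/

import Mathlib

/- STATEMENT 18: Let c ∈ (0,1) and let P ∈ SO(3) be a rotation about the z-axis (i.e. P
fixes (0,0,1)). Then the attractor A(c,P) is connected iff A₁ ∩ A₃ ≠ ∅, and the four
conditions A₁∩A₃ ≠ ∅, A₁∩A₄ ≠ ∅, A₂∩A₄ ≠ ∅, A₂∩A₃ ≠ ∅ are pairwise equivalent.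
(0-based indices: A₁ = piece 0, …, A₄ = piece 3.) -/
noncomputable section
open Matrix

abbrev E3 := EuclideanSpace ℝ (Fin 3)

def vtx : Fin 4 → E3 :=
  ![!₂[1, -1, 1], !₂[-1, 1, 1], !₂[-1, -1, -1], !₂[1, 1, -1]]

/-- The other four vertices of the cube `[-1,1]³`. -/
def vtx' : Fin 4 → E3 :=
  ![!₂[1, 1, 1], !₂[-1, -1, 1], !₂[1, -1, -1], !₂[-1, 1, -1]]

/-- The cube `C₀ = [-1,1]³`. -/
def C0 : Set E3 := {x | ∀ i, x i ∈ Set.Icc (-1 : ℝ) 1}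

/-- The regular tetrahedron `T₀` with vertices `v₁, v₂, v₃, v₄`. -/
def T0 : Set E3 := convexHull ℝ (Set.range vtx)

/-- Membership in the hexahedral group `𝒫₆`: rotations preserving the cube `C₀`. -/
def memP6 (Q : Matrix (Fin 3) (Fin 3) ℝ) : Prop :=
  Q ∈ Matrix.specialOrthogonalGroup (Fin 3) ℝ ∧ Matrix.toEuclideanLin Q '' C0 = C0

/-- Membership in the tetrahedral group `𝒫₄`: rotations preserving the tetrahedron `T₀`. -/
def memP4 (Q : Matrix (Fin 3) (Fin 3) ℝ) : Prop :=
  Q ∈ Matrix.specialOrthogonalGroup (Fin 3) ℝ ∧ Matrix.toEuclideanLin Q '' T0 = T0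

def fmap (c : ℝ) (P : Matrix (Fin 3) (Fin 3) ℝ) (i : Fin 4) (x : E3) : E3 :=
  c • Matrix.toEuclideanLin P x + vtx i

def IsAttractor (c : ℝ) (P : Matrix (Fin 3) (Fin 3) ℝ) (A : Set E3) : Prop :=
  A.Nonempty ∧ IsCompact A ∧ A = ⋃ i : Fin 4, fmap c P i '' A

lemma euclid_apply (M : Matrix (Fin 3) (Fin 3) ℝ) (v : E3) (i : Fin 3) :
    Matrix.toEuclideanLin M v i = M i 0 * v 0 + M i 1 * v 1 + M i 2 * v 2 := by
  show (M *ᵥ (WithLp.equiv 2 _ v)) i = _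
  simp [Matrix.mulVec, dotProduct, Fin.sum_univ_three]

lemma norm_orth (M : Matrix (Fin 3) (Fin 3) ℝ) (hM : star M * M = 1) (v : E3) :
    ‖Matrix.toEuclideanLin M v‖ = ‖v‖ := by
  have key : ∀ i j, M 0 i * M 0 j + M 1 i * M 1 j + M 2 i * M 2 j = (1 : Matrix (Fin 3) (Fin 3) ℝ) i j := by
    intro i j
    have := congrFun (congrFun hM i) j
    simpa [Matrix.mul_apply, Fin.sum_univ_three, mul_comm] using this
  rw [EuclideanSpace.norm_eq, EuclideanSpace.norm_eq]
  congr 1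
  simp only [Real.norm_eq_abs, sq_abs, euclid_apply]
  rw [Fin.sum_univ_three, Fin.sum_univ_three]
  have h00 := key 0 0; have h11 := key 1 1; have h22 := key 2 2
  have h01 := key 0 1; have h02 := key 0 2; have h12 := key 1 2
  simp [Matrix.one_apply] at h00 h11 h22 h01 h02 h12
  linear_combination (v 0)^2 * h00 + (v 1)^2 * h11 + (v 2)^2 * h22 +
    2 * v 0 * v 1 * h01 + 2 * v 0 * v 2 * h02 + 2 * v 1 * v 2 * h12

def Rm : Matrix (Fin 3) (Fin 3) ℝ := !![0,1,0; -1,0,0; 0,0,1]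

lemma Rm_orth : star Rm * Rm = 1 := by
  ext i j
  fin_cases i <;> fin_cases j <;>
    simp [Rm, Matrix.mul_apply, Fin.sum_univ_three, Matrix.one_apply,
      Matrix.vecHead, Matrix.vecTail]

lemma Rm_apply (v : E3) (i : Fin 3) :
    Matrix.toEuclideanLin Rm v i = ![v 1, -v 0, v 2] i := by
  fin_cases i <;> simp [euclid_apply, Rm, Matrix.vecHead, Matrix.vecTail]

lemma comm_RP (P : Matrix (Fin 3) (Fin 3) ℝ)
    (hP : P ∈ Matrix.specialOrthogonalGroup (Fin 3) ℝ)
    (hPz : Matrix.toEuclideanLin P (EuclideanSpace.single (2 : Fin 3) (1 : ℝ)) =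
      EuclideanSpace.single (2 : Fin 3) (1 : ℝ)) :
    Rm * P = P * Rm := by
  have horth : star P * P = 1 :=
    (Matrix.mem_orthogonalGroup_iff' (Fin 3) ℝ).mp ((Matrix.mem_specialOrthogonalGroup_iff.mp hP).1)
  have hdet' : P.det = 1 := (Matrix.mem_specialOrthogonalGroup_iff.mp hP).2
  have hdet : P.det = 1 := hdet'
  -- column: P i 2 = δ i 2
  have hcol : ∀ i, P i 2 = if i = 2 then 1 else 0 := by
    intro i
    have := congrArg (· i) hPz
    simp only [euclid_apply] at this
    simpa [EuclideanSpace.single_apply] using this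
  -- row: P 2 i = δ 2 i
  have hrow : ∀ i, P 2 i = if i = 2 then 1 else 0 := by
    intro i
    have := congrFun (congrFun horth i) 2
    simp only [Matrix.mul_apply, Fin.sum_univ_three, Matrix.one_apply] at this
    have h02 : P 0 2 = 0 := by simpa using hcol 0
    have h12 : P 1 2 = 0 := by simpa using hcol 1
    have h22 : P 2 2 = 1 := by simpa using hcol 2
    fin_cases i <;> simp_all <;> linarith
  have h02 : P 0 2 = 0 := by simpa using hcol 0
  have h12 : P 1 2 = 0 := by simpa using hcol 1
  have h22 : P 2 2 = 1 := by simpa using hcol 2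
  have h20 : P 2 0 = 0 := by simpa using hrow 0
  have h21 : P 2 1 = 0 := by simpa using hrow 1
  -- 2x2 block relations
  have e1 : P 0 0 * P 0 0 + P 1 0 * P 1 0 = 1 := by
    have := congrFun (congrFun horth 0) 0
    simp [Matrix.mul_apply, Fin.sum_univ_three, Matrix.one_apply, h20] at this
    linarith
  have e2 : P 0 0 * P 0 1 + P 1 0 * P 1 1 = 0 := by
    have := congrFun (congrFun horth 0) 1
    simp [Matrix.mul_apply, Fin.sum_univ_three, Matrix.one_apply, h20, h21] at this
    linarith
  have e4 : P 0 0 * P 1 1 - P 0 1 * P 1 0 = 1 := by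
    have := hdet
    rw [Matrix.det_fin_three] at this
    rw [h02, h12, h20, h21, h22] at this
    linear_combination this
  have hd : P 1 1 = P 0 0 := by
    linear_combination P 0 0 * e4 - P 1 1 * e1 + P 1 0 * e2
  have hb : P 0 1 = - P 1 0 := by
    linear_combination -(P 0 1) * e1 + P 0 0 * e2 - P 1 0 * e4
  ext i j
  fin_cases i <;> fin_cases j <;>
    simp [Rm, Matrix.mul_apply, Fin.sum_univ_three, h02, h12, h22, h20, h21, hd, hb,
      Matrix.vecHead, Matrix.vecTail]

def pp : Fin 4 → Fin 4 → Fin 4 × Fin 4 :=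
  fun i j => ![![(0,0),(2,3),(0,3),(1,3)], ![(3,2),(1,1),(0,2),(1,2)],
    ![(3,0),(2,0),(2,2),(1,0)], ![(3,1),(2,1),(0,1),(3,3)]] i j

lemma pp_surj : ∀ q : Fin 4 × Fin 4, ∃ i j, pp i j = q := by decide

lemma Rm_vtx : ∀ i j : Fin 4, Matrix.toEuclideanLin Rm (vtx i - vtx j)
    = vtx (pp i j).1 - vtx (pp i j).2 := by
  intro i j
  have hsub : ∀ (x y : E3) (k : Fin 3), (x - y) k = x k - y k := fun _ _ _ => rfl
  fin_cases i <;> fin_cases j <;>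
    (ext k; rw [Rm_apply]; fin_cases k <;>
      simp [pp, vtx, hsub, Matrix.vecHead, Matrix.vecTail] <;> norm_num)

open Metric in
lemma attractor_subset {X : Type*} [MetricSpace X] {ι : Type*} (g : ι → X → X) (c : ℝ)
    (hc1 : c < 1)
    (hg : ∀ p x y, dist (g p x) (g p y) ≤ c * dist x y)
    {E F : Set X} (hEne : E.Nonempty) (hEc : IsCompact E) (hFne : F.Nonempty) (hFc : IsCompact F)
    (hE : E = ⋃ p, g p '' E) (hF : F = ⋃ p, g p '' F) : E ⊆ F := by
  obtain ⟨x₀, hx₀E, hmax'⟩ := hEc.exists_isMaxOn hEne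
    ((continuous_infDist_pt F).continuousOn)
  have hmax : ∀ x ∈ E, infDist x F ≤ infDist x₀ F := fun x hx => hmax' hx
  set h := infDist x₀ F with hh
  have hF_closed : IsClosed F := hFc.isClosed
  -- h = 0
  have hx₀' : x₀ ∈ ⋃ p, g p '' E := hE ▸ hx₀E
  obtain ⟨p, x₁, hx₁E, hgx⟩ := by simpa using hx₀'
  obtain ⟨y₁, hy₁F, hdy⟩ := hFc.exists_infDist_eq_dist hFne x₁
  have hgy : g p y₁ ∈ F := by
    rw [hF]
    exact Set.mem_iUnion.mpr ⟨p, Set.mem_image_of_mem _ hy₁F⟩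
  have hstep : h ≤ c * infDist x₁ F := by
    calc h = infDist x₀ F := hh
      _ ≤ dist x₀ (g p y₁) := infDist_le_dist_of_mem hgy
      _ = dist (g p x₁) (g p y₁) := by rw [hgx]
      _ ≤ c * dist x₁ y₁ := hg p _ _
      _ = c * infDist x₁ F := by rw [hdy]
  have hd1 : 0 ≤ infDist x₁ F := infDist_nonneg
  have hd2 : infDist x₁ F ≤ h := hmax x₁ hx₁E
  have h0 : 0 ≤ h := hh ▸ infDist_nonneg
  have hzero : h = 0 := by
    rcases le_or_gt c 0 with hcle | hcpos
    · nlinarith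
    · nlinarith
  intro x hxE
  have : infDist x F ≤ 0 := hzero ▸ hmax x hxE
  have : infDist x F = 0 := le_antisymm this infDist_nonneg
  exact (hF_closed.mem_iff_infDist_zero hFne).mpr this

open Metric in
lemma chain_connected {X : Type*} [MetricSpace X] {A : Set X} (hne : A.Nonempty)
    (hcp : IsCompact A)
    (hchain : ∀ ε > (0:ℝ), ∀ x ∈ A, ∀ y ∈ A,
      Relation.ReflTransGen (fun a b => b ∈ A ∧ dist a b ≤ ε) x y) :
    IsConnected A := by
  refine ⟨hne, ?_⟩
  rw [isPreconnected_iff_subset_of_disjoint_closed]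
  intro U V hU hV hsub hdisj
  by_contra hcon
  push_neg at hcon
  obtain ⟨hnU, hnV⟩ := hcon
  obtain ⟨x, hxA, hxU⟩ := Set.not_subset.mp hnU
  obtain ⟨y, hyA, hyV⟩ := Set.not_subset.mp hnV
  set K := A ∩ U with hK
  set L := A ∩ V with hL
  have hKc : IsCompact K := hcp.inter_right hU
  have hLc : IsCompact L := hcp.inter_right hV
  have hxL : x ∈ L := ⟨hxA, (hsub hxA).resolve_left hxU⟩
  have hyK : y ∈ K := ⟨hyA, (hsub hyA).resolve_right hyV⟩
  have hKL : ∀ z ∈ A, z ∈ K ∨ z ∈ L := fun z hz =>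
    (hsub hz).imp (fun h => ⟨hz, h⟩) (fun h => ⟨hz, h⟩)
  have hdisj' : ∀ z, z ∈ K → z ∈ L → False := fun z h1 h2 =>
    Set.eq_empty_iff_forall_notMem.mp hdisj z ⟨h1.1, h1.2, h2.2⟩
  obtain ⟨k₀, hk₀, hmin'⟩ := hKc.exists_isMinOn ⟨y, hyK⟩
    ((continuous_infDist_pt L).continuousOn)
  set ε := infDist k₀ L with hε
  have hεpos : 0 < ε := by
    rcases eq_or_lt_of_le (infDist_nonneg : 0 ≤ ε) with he | h
    · exfalso
      have : k₀ ∈ L := (hLc.isClosed.mem_iff_infDist_zero ⟨x, hxL⟩).mpr he.symm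
      exact hdisj' _ hk₀ this
    · exact h
  have hchain' := hchain (ε/2) (by linarith) y hyA x hxA
  have hstay : ∀ z, Relation.ReflTransGen (fun a b => b ∈ A ∧ dist a b ≤ ε/2) y z → z ∈ K := by
    intro z hz
    induction hz with
    | refl => exact hyK
    | tail hab hbc ih =>
      rcases hKL _ hbc.1 with h | h
      · exact h
      · exfalso
        have h1 : ε ≤ infDist _ L := hmin' ih
        rename_i b cc
        have h2 : infDist b L ≤ dist b cc := infDist_le_dist_of_mem h
        have := hbc.2
        linarith
  exact hdisj' x (hstay x hchain') hxL

lemma abel1 {M : Type*} [AddCommGroup M] (p q u v : M) :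
    (p + u) - (q + v) = (p - q) + (u - v) := by abel

lemma abel2 {M : Type*} [AddCommGroup M] (p q u v : M) (h : v - u = p - q) :
    p + u = q + v := by
  have h0 : (p + u) - (q + v) = (p - q) - (v - u) := by abel
  rw [← sub_eq_zero, h0, h, sub_self]

theorem connected_iff_pieces_meet (c : ℝ) (hc : c ∈ Set.Ioo (0 : ℝ) 1)
    (P : Matrix (Fin 3) (Fin 3) ℝ)
    (hP : P ∈ Matrix.specialOrthogonalGroup (Fin 3) ℝ)
    (hPz : Matrix.toEuclideanLin P (EuclideanSpace.single (2 : Fin 3) (1 : ℝ)) =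
      EuclideanSpace.single (2 : Fin 3) (1 : ℝ))
    (A : Set E3) (hA : IsAttractor c P A) :
    (IsConnected A ↔ (fmap c P 0 '' A ∩ fmap c P 2 '' A).Nonempty) ∧
    ((fmap c P 0 '' A ∩ fmap c P 2 '' A).Nonempty ↔
      (fmap c P 0 '' A ∩ fmap c P 3 '' A).Nonempty) ∧
    ((fmap c P 0 '' A ∩ fmap c P 3 '' A).Nonempty ↔
      (fmap c P 1 '' A ∩ fmap c P 3 '' A).Nonempty) ∧
    ((fmap c P 1 '' A ∩ fmap c P 3 '' A).Nonempty ↔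
      (fmap c P 1 '' A ∩ fmap c P 2 '' A).Nonempty) := by
  obtain ⟨hc0, hc1⟩ := hc
  obtain ⟨hAne, hAcp, hAeq⟩ := hA
  have horth : star P * P = 1 :=
    (Matrix.mem_orthogonalGroup_iff' (Fin 3) ℝ).mp ((Matrix.mem_specialOrthogonalGroup_iff.mp hP).1)
  have hPn : ∀ v : E3, ‖Matrix.toEuclideanLin P v‖ = ‖v‖ := norm_orth P horth
  have hTn : ∀ v : E3, ‖Matrix.toEuclideanLin Rm v‖ = ‖v‖ := norm_orth Rm Rm_orth
  have euclid_mul : ∀ (M N : Matrix (Fin 3) (Fin 3) ℝ) (v : E3),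
      Matrix.toEuclideanLin (M * N) v = Matrix.toEuclideanLin M (Matrix.toEuclideanLin N v) := by
    intro M N v
    ext i
    simp only [euclid_apply, Matrix.mul_apply, Fin.sum_univ_three]
    ring
  have hcomm : ∀ v, Matrix.toEuclideanLin Rm (Matrix.toEuclideanLin P v)
      = Matrix.toEuclideanLin P (Matrix.toEuclideanLin Rm v) := by
    intro v
    rw [← euclid_mul, ← euclid_mul, comm_RP P hP hPz]
  have hTinj : Function.Injective (Matrix.toEuclideanLin Rm) := by
    intro a b hab
    have h0 : ‖a - b‖ = 0 := by rw [← hTn, map_sub, hab, sub_self, norm_zero]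
    rwa [norm_eq_zero, sub_eq_zero] at h0
  have hTcont : Continuous (Matrix.toEuclideanLin Rm) :=
    LinearMap.continuous_of_finiteDimensional _
  have hfc : ∀ i, Continuous (fmap c P i) := by
    intro i
    exact (((Matrix.toEuclideanLin P).continuous_of_finiteDimensional).const_smul c).add
      continuous_const
  have hsubA : ∀ (i : Fin 4), ∀ a ∈ A, fmap c P i a ∈ A := by
    intro i a ha
    have h1 : fmap c P i '' A ⊆ ⋃ j, fmap c P j '' A :=
      Set.subset_iUnion (fun j => fmap c P j '' A) i
    rw [← hAeq] at h1
    exact h1 (Set.mem_image_of_mem _ ha)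
  have hfd : ∀ (w : E3) (x y : E3),
      dist (c • Matrix.toEuclideanLin P x + w) (c • Matrix.toEuclideanLin P y + w)
        = c * dist x y := by
    intro w x y
    rw [dist_add_right, dist_eq_norm, ← smul_sub, ← map_sub, norm_smul, hPn,
      Real.norm_eq_abs, abs_of_pos hc0, dist_eq_norm]
  -- the difference set
  set D : Set E3 := (fun p : E3 × E3 => p.1 - p.2) '' (A ×ˢ A) with hD
  have hDmem : ∀ x, x ∈ D ↔ ∃ a ∈ A, ∃ b ∈ A, a - b = x := by
    intro x
    constructor
    · rintro ⟨⟨a, b⟩, ⟨ha, hb⟩, h⟩; exact ⟨a, ha, b, hb, h⟩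
    · rintro ⟨a, ha, b, hb, h⟩; exact ⟨(a, b), ⟨ha, hb⟩, h⟩
  have hDcp : IsCompact D := (hAcp.prod hAcp).image (continuous_fst.sub continuous_snd)
  have hDne : D.Nonempty := by
    obtain ⟨a, ha⟩ := hAne
    exact ⟨a - a, (hDmem _).mpr ⟨a, ha, a, ha, rfl⟩⟩
  clear_value D
  clear hD
  set g : Fin 4 × Fin 4 → E3 → E3 :=
    fun p x => c • Matrix.toEuclideanLin P x + (vtx p.1 - vtx p.2) with hg
  have hgd : ∀ p (x y : E3), dist (g p x) (g p y) ≤ c * dist x y :=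
    fun p x y => (hfd _ x y).le
  have hDeq : D = ⋃ p : Fin 4 × Fin 4, g p '' D := by
    apply Set.Subset.antisymm
    · intro x hx
      obtain ⟨a, ha, b, hb, rfl⟩ := (hDmem x).mp hx
      rw [hAeq] at ha hb
      obtain ⟨i, a', ha', rfl⟩ : ∃ i, ∃ a' ∈ A, fmap c P i a' = a := by simpa using ha
      obtain ⟨j, b', hb', rfl⟩ : ∃ j, ∃ b' ∈ A, fmap c P j b' = b := by simpa using hb
      refine Set.mem_iUnion.mpr ⟨(i, j), ⟨a' - b', (hDmem _).mpr ⟨a', ha', b', hb', rfl⟩, ?_⟩⟩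
      show c • Matrix.toEuclideanLin P (a' - b') + (vtx i - vtx j) = _
      rw [map_sub, smul_sub]
      exact (abel1 _ _ _ _).symm
    · refine Set.iUnion_subset fun p => ?_
      rintro x ⟨d, hd, rfl⟩
      obtain ⟨a, ha, b, hb, rfl⟩ := (hDmem d).mp hd
      refine (hDmem _).mpr ⟨fmap c P p.1 a, hsubA p.1 a ha, fmap c P p.2 b, hsubA p.2 b hb, ?_⟩
      show fmap c P p.1 a - fmap c P p.2 b
          = c • Matrix.toEuclideanLin P (a - b) + (vtx p.1 - vtx p.2)
      rw [map_sub, smul_sub]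
      exact abel1 _ _ _ _
  -- invariance of D under the quarter turn
  have hTg : ∀ (p : Fin 4 × Fin 4) (x : E3),
      Matrix.toEuclideanLin Rm (g p x) = g (pp p.1 p.2) (Matrix.toEuclideanLin Rm x) := by
    intro p x
    show Matrix.toEuclideanLin Rm (c • Matrix.toEuclideanLin P x + (vtx p.1 - vtx p.2)) = _
    rw [map_add, _root_.map_smul, hcomm, Rm_vtx]
  have himg : ∀ p : Fin 4 × Fin 4, Matrix.toEuclideanLin Rm '' (g p '' D)
      = g (pp p.1 p.2) '' (Matrix.toEuclideanLin Rm '' D) := by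
    intro p
    rw [Set.image_image, Set.image_image]
    exact Set.image_congr fun x _ => hTg p x
  have hTDeq : Matrix.toEuclideanLin Rm '' D
      = ⋃ p : Fin 4 × Fin 4, g p '' (Matrix.toEuclideanLin Rm '' D) := by
    calc Matrix.toEuclideanLin Rm '' D
        = ⋃ p : Fin 4 × Fin 4, Matrix.toEuclideanLin Rm '' (g p '' D) := by
          rw [← Set.image_iUnion, ← hDeq]
      _ = ⋃ p : Fin 4 × Fin 4, g (pp p.1 p.2) '' (Matrix.toEuclideanLin Rm '' D) :=
          Set.iUnion_congr himg
      _ = ⋃ q : Fin 4 × Fin 4, g q '' (Matrix.toEuclideanLin Rm '' D) := by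
          ext x
          simp only [Set.mem_iUnion]
          constructor
          · rintro ⟨p, hx⟩; exact ⟨_, hx⟩
          · rintro ⟨q, hx⟩
            obtain ⟨i, j, hij⟩ := pp_surj q
            exact ⟨(i, j), by rw [hij]; exact hx⟩
  have hTD : Matrix.toEuclideanLin Rm '' D = D := by
    have h1 := attractor_subset g c hc1 hgd (hDne.image _) (hDcp.image hTcont) hDne hDcp hTDeq hDeq
    have h2 := attractor_subset g c hc1 hgd hDne hDcp (hDne.image _) (hDcp.image hTcont) hDeq hTDeq
    exact Set.Subset.antisymm h1 h2
  -- the scaled rotated difference set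
  set S : Set E3 := (fun x => c • Matrix.toEuclideanLin P x) '' D with hS
  have hTS : Matrix.toEuclideanLin Rm '' S = S := by
    calc Matrix.toEuclideanLin Rm '' S
        = (fun x => Matrix.toEuclideanLin Rm (c • Matrix.toEuclideanLin P x)) '' D := by
          rw [hS, Set.image_image]
      _ = (fun x => c • Matrix.toEuclideanLin P (Matrix.toEuclideanLin Rm x)) '' D := by
          refine Set.image_congr fun x _ => ?_
          rw [_root_.map_smul, hcomm]
      _ = (fun x => c • Matrix.toEuclideanLin P x) '' (Matrix.toEuclideanLin Rm '' D) := by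
          rw [Set.image_image]
      _ = S := by rw [hTD]
  have hSinv : ∀ w : E3, w ∈ S ↔ Matrix.toEuclideanLin Rm w ∈ S := by
    intro w
    constructor
    · intro hw
      rw [← hTS]
      exact Set.mem_image_of_mem _ hw
    · intro hw
      rw [← hTS] at hw
      obtain ⟨u, hu, huw⟩ := hw
      rwa [← hTinj huw]
  -- intersections of pieces in terms of S
  have hmeet : ∀ i j : Fin 4,
      (fmap c P i '' A ∩ fmap c P j '' A).Nonempty ↔ (vtx j - vtx i) ∈ S := by
    intro i j
    constructor
    · rintro ⟨z, ⟨a, ha, hza⟩, ⟨b, hb, hzb⟩⟩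
      refine ⟨a - b, (hDmem _).mpr ⟨a, ha, b, hb, rfl⟩, ?_⟩
      show c • Matrix.toEuclideanLin P (a - b) = vtx j - vtx i
      rw [map_sub, smul_sub]
      have h1 : c • Matrix.toEuclideanLin P a + vtx i
          = c • Matrix.toEuclideanLin P b + vtx j := by
        rw [← hzb] at hza; exact hza
      have h2 := congrArg (fun z => z - (c • Matrix.toEuclideanLin P b + vtx i)) h1
      calc c • Matrix.toEuclideanLin P a - c • Matrix.toEuclideanLin P b
          = (c • Matrix.toEuclideanLin P a + vtx i) - (c • Matrix.toEuclideanLin P b + vtx i) := by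
            abel
        _ = (c • Matrix.toEuclideanLin P b + vtx j) - (c • Matrix.toEuclideanLin P b + vtx i) := by
            rw [h1]
        _ = vtx j - vtx i := by abel
    · rintro ⟨d, hd, hds⟩
      obtain ⟨a, ha, b, hb, rfl⟩ := (hDmem d).mp hd
      have hds' : c • Matrix.toEuclideanLin P a - c • Matrix.toEuclideanLin P b
          = vtx j - vtx i := by
        rw [← smul_sub, ← map_sub]; exact hds
      have heq : fmap c P i a = fmap c P j b :=
        abel2 _ _ _ _ hds'.symm
      exact ⟨fmap c P i a, Set.mem_image_of_mem _ ha, heq ▸ Set.mem_image_of_mem _ hb⟩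
  -- the transfer principle between pairs of pieces
  have htrans : ∀ i j : Fin 4,
      (fmap c P i '' A ∩ fmap c P j '' A).Nonempty ↔
      (fmap c P (pp j i).2 '' A ∩ fmap c P (pp j i).1 '' A).Nonempty := by
    intro i j
    rw [hmeet, hmeet, hSinv (vtx j - vtx i), Rm_vtx j i]
  have iff1 : (fmap c P 0 '' A ∩ fmap c P 2 '' A).Nonempty ↔
      (fmap c P 0 '' A ∩ fmap c P 3 '' A).Nonempty := by
    have h := htrans 0 2
    rw [show pp 2 0 = ((3 : Fin 4), (0 : Fin 4)) from rfl] at h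
    exact h
  have iff2 : (fmap c P 0 '' A ∩ fmap c P 3 '' A).Nonempty ↔
      (fmap c P 1 '' A ∩ fmap c P 3 '' A).Nonempty := by
    have h := htrans 0 3
    rw [show pp 3 0 = ((3 : Fin 4), (1 : Fin 4)) from rfl] at h
    exact h
  have iff3 : (fmap c P 1 '' A ∩ fmap c P 3 '' A).Nonempty ↔
      (fmap c P 1 '' A ∩ fmap c P 2 '' A).Nonempty := by
    have h := htrans 1 3
    rw [show pp 3 1 = ((2 : Fin 4), (1 : Fin 4)) from rfl] at h
    exact h
  refine ⟨?_, iff1, iff2, iff3⟩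
  constructor
  · -- connected → pieces 0 and 2 meet
    intro hconn
    by_contra h02
    have h03 : ¬ (fmap c P 0 '' A ∩ fmap c P 3 '' A).Nonempty := fun h => h02 (iff1.mpr h)
    have h13 : ¬ (fmap c P 1 '' A ∩ fmap c P 3 '' A).Nonempty := fun h => h03 (iff2.mpr h)
    have h12 : ¬ (fmap c P 1 '' A ∩ fmap c P 2 '' A).Nonempty := fun h => h13 (iff3.mpr h)
    set U : Set E3 := fmap c P 0 '' A ∪ fmap c P 1 '' A with hU
    set V : Set E3 := fmap c P 2 '' A ∪ fmap c P 3 '' A with hV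
    have hUc : IsClosed U := ((hAcp.image (hfc 0)).union (hAcp.image (hfc 1))).isClosed
    have hVc : IsClosed V := ((hAcp.image (hfc 2)).union (hAcp.image (hfc 3))).isClosed
    have hsubUV : A ⊆ U ∪ V := by
      intro x hx
      rw [hAeq] at hx
      obtain ⟨i, hxi⟩ := Set.mem_iUnion.mp hx
      fin_cases i
      · exact Or.inl (Or.inl hxi)
      · exact Or.inl (Or.inr hxi)
      · exact Or.inr (Or.inl hxi)
      · exact Or.inr (Or.inr hxi)
    have hdis : A ∩ (U ∩ V) = ∅ := by
      rw [Set.eq_empty_iff_forall_notMem]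
      rintro x ⟨-, hxU, hxV⟩
      rcases hxU with h0 | h1 <;> rcases hxV with h2 | h3
      · exact h02 ⟨x, h0, h2⟩
      · exact h03 ⟨x, h0, h3⟩
      · exact h12 ⟨x, h1, h2⟩
      · exact h13 ⟨x, h1, h3⟩
    have hpre := hconn.2
    rw [isPreconnected_iff_subset_of_disjoint_closed] at hpre
    have himgsub : ∀ i : Fin 4, fmap c P i '' A ⊆ A := by
      rintro i x ⟨a, ha, rfl⟩
      exact hsubA i a ha
    rcases hpre U V hUc hVc hsubUV hdis with hAU | hAV
    · obtain ⟨z, hz⟩ := hAne.image (fmap c P 2)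
      rcases hAU (himgsub 2 hz) with h0 | h1
      · exact h02 ⟨z, h0, hz⟩
      · exact h12 ⟨z, h1, hz⟩
    · obtain ⟨z, hz⟩ := hAne.image (fmap c P 0)
      rcases hAV (himgsub 0 hz) with h2 | h3
      · exact h02 ⟨z, hz, h2⟩
      · exact h03 ⟨z, hz, h3⟩
  · -- pieces 0 and 2 meet → connected
    intro h02
    have h03 := iff1.mp h02
    have h13 := iff2.mp h03
    have h12 := iff3.mp h13
    apply chain_connected hAne hAcp
    have hmono : ∀ {ε ε' : ℝ}, ε ≤ ε' → ∀ {x y : E3},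
        Relation.ReflTransGen (fun a b => b ∈ A ∧ dist a b ≤ ε) x y →
        Relation.ReflTransGen (fun a b => b ∈ A ∧ dist a b ≤ ε') x y :=
      fun hle => Relation.ReflTransGen.mono (fun a b hab => ⟨hab.1, hab.2.trans hle⟩) _ _
    have himgchain : ∀ (ε : ℝ) (i : Fin 4) (x y : E3),
        Relation.ReflTransGen (fun a b => b ∈ A ∧ dist a b ≤ ε) x y →
        Relation.ReflTransGen (fun a b => b ∈ A ∧ dist a b ≤ c * ε)
          (fmap c P i x) (fmap c P i y) := by
      intro ε i x y h
      induction h with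
      | refl => exact Relation.ReflTransGen.refl
      | tail hab hbc ih =>
        rename_i b b'
        have hdd : dist (fmap c P i b) (fmap c P i b') = c * dist b b' := hfd (vtx i) b b'
        exact ih.tail ⟨hsubA i _ hbc.1, by
          rw [hdd]; exact mul_le_mul_of_nonneg_left hbc.2 hc0.le⟩
    have hstep : ∀ ε : ℝ,
        (∀ x ∈ A, ∀ y ∈ A, Relation.ReflTransGen (fun a b => b ∈ A ∧ dist a b ≤ ε) x y) →
        (∀ x ∈ A, ∀ y ∈ A,
          Relation.ReflTransGen (fun a b => b ∈ A ∧ dist a b ≤ c * ε) x y) := by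
      intro ε hch x hx y hy
      have hwi : ∀ (i : Fin 4), ∀ u ∈ A, ∀ v ∈ A,
          Relation.ReflTransGen (fun a b => b ∈ A ∧ dist a b ≤ c * ε)
            (fmap c P i u) (fmap c P i v) :=
        fun i u hu v hv => himgchain ε i u v (hch u hu v hv)
      have hop : ∀ (i j : Fin 4), (fmap c P i '' A ∩ fmap c P j '' A).Nonempty →
          ∀ u ∈ A, ∀ v ∈ A,
          Relation.ReflTransGen (fun a b => b ∈ A ∧ dist a b ≤ c * ε)
            (fmap c P i u) (fmap c P j v) := by
        rintro i j ⟨z, ⟨u', hu', hz1⟩, ⟨v', hv', hz2⟩⟩ u hu v hv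
        have t1 := hwi i u hu u' hu'
        have t2 := hwi j v' hv' v hv
        rw [hz1] at t1
        rw [hz2] at t2
        exact t1.trans t2
      have hcm : ∀ i j : Fin 4, (fmap c P i '' A ∩ fmap c P j '' A).Nonempty →
          (fmap c P j '' A ∩ fmap c P i '' A).Nonempty := fun i j h => by
        rwa [Set.inter_comm] at h
      rw [hAeq] at hx hy
      obtain ⟨i, u, hu, rfl⟩ : ∃ i, ∃ u ∈ A, fmap c P i u = x := by simpa using hx
      obtain ⟨j, v, hv, rfl⟩ : ∃ j, ∃ v ∈ A, fmap c P j v = y := by simpa using hy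
      fin_cases i <;> fin_cases j <;>
        first
        | exact hwi _ u hu v hv
        | exact hop 0 2 h02 u hu v hv
        | exact hop 0 3 h03 u hu v hv
        | exact hop 1 2 h12 u hu v hv
        | exact hop 1 3 h13 u hu v hv
        | exact hop 2 0 (hcm 0 2 h02) u hu v hv
        | exact hop 2 1 (hcm 1 2 h12) u hu v hv
        | exact hop 3 0 (hcm 0 3 h03) u hu v hv
        | exact hop 3 1 (hcm 1 3 h13) u hu v hv
        | exact (hop 0 2 h02 u hu u hu).trans (hop 2 1 (hcm 1 2 h12) u hu v hv)
        | exact (hop 1 2 h12 u hu u hu).trans (hop 2 0 (hcm 0 2 h02) u hu v hv)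
        | exact (hop 2 0 (hcm 0 2 h02) u hu u hu).trans (hop 0 3 h03 u hu v hv)
        | exact (hop 3 0 (hcm 0 3 h03) u hu u hu).trans (hop 0 2 h02 u hu v hv)
    have hiter : ∀ n : ℕ, ∀ x ∈ A, ∀ y ∈ A,
        Relation.ReflTransGen
          (fun a b => b ∈ A ∧ dist a b ≤ c ^ n * Metric.diam A) x y := by
      intro n
      induction n with
      | zero =>
        intro x hx y hy
        refine Relation.ReflTransGen.single ⟨hy, ?_⟩
        simpa using Metric.dist_le_diam_of_mem hAcp.isBounded hx hy
      | succ n ih =>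
        intro x hx y hy
        have h' := hstep _ ih x hx y hy
        have heq : c * (c ^ n * Metric.diam A) = c ^ (n + 1) * Metric.diam A := by ring
        rwa [heq] at h'
    intro ε hε x hx y hy
    have hd0 : 0 ≤ Metric.diam A := Metric.diam_nonneg
    have hpos : 0 < ε / (Metric.diam A + 1) := div_pos hε (by linarith)
    obtain ⟨n, hn⟩ := exists_pow_lt_of_lt_one hpos hc1
    have hcn : (0:ℝ) < c ^ n := pow_pos hc0 n
    have h1 : c ^ n * (Metric.diam A + 1) < ε :=
      (lt_div_iff₀ (by linarith : (0:ℝ) < Metric.diam A + 1)).mp hn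
    have hle : c ^ n * Metric.diam A ≤ ε := by nlinarith
    exact hmono hle (hiter n x hx y hy)
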